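/- Let α ∈ ℝ, let m, M be natural numbers with m ≥ 1, let Ψ ∈ [−π, π), ε > 0, and let L be a function holomorphic on the sector S(Ψ, ε) := {r e^{iθ} : r > 0, θ ∈ (Ψ−ε, Ψ+ε)} that admits an asymptotic expansion to all orders: there are coefficients d_{j,k} ∈ ℂ (j ∈ ℕ, 0 ≤ k ≤ M) such that for every N ∈ ℕ, L(z) − ∑_{j=0}^N ∑_{k=0}^M d_{j,k}·z^{α−j/m}·(log z)^k = o(|z|^{α−N/m}) as |z| → ∞ in S(Ψ, ε), where log z is the branch with imaginary part in (Ψ−ε, Ψ+ε) and z^β := exp(β·log z). Let c ∈ ℂ, let 0 < ε′ < ε, and suppose R₀ > 0 is such that z − c ∈ S(Ψ, ε) whenever z ∈ S(Ψ, ε′) and |z| ≥ R₀. Then there exist coefficients Ω_{j,k} ∈ ℂ (j ∈ ℕ, 0 ≤ k ≤ M) such that for every N ∈ ℕ, L(z − c) − ∑_{j=0}^N ∑_{k=0}^M Ω_{j,k}·z^{α−j/m}·(log z)^k = o(|z|^{α−N/m}) as |z| → ∞ in S(Ψ, ε′). Moreover Ω_{0,k} = d_{0,k} for every k ∈ {0,…,M}.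 -/

import Mathlib

open Complex Filter Set MeasureTheory Asymptotics

noncomputable section

/-- Branch of the logarithm with imaginary part in `(Ψ - 2π, Ψ]`. -/
def logPsi (Ψ : ℝ) (w : ℂ) : ℂ :=
  Complex.log (w * Complex.exp (-((Ψ - Real.pi : ℝ) : ℂ) * Complex.I)) +
    ((Ψ - Real.pi : ℝ) : ℂ) * Complex.I

/-- `w ^ s` with branch cut along the ray of angle `Ψ`. -/
def cpowPsi (Ψ : ℝ) (w s : ℂ) : ℂ := Complex.exp (s * logPsi Ψ w)

/-- The open sector of half-opening `ε` around the ray of angle `Ψ` (arguments mod 2π). -/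
def sector (Ψ ε : ℝ) : Set ℂ :=
  {z | ∃ r θ : ℝ, 0 < r ∧ θ ∈ Set.Ioo (Ψ - ε) (Ψ + ε) ∧
    z = (r : ℂ) * Complex.exp ((θ : ℂ) * Complex.I)}

/-- Branch of the logarithm holomorphic on the sector around the angle `Ψ`,
with imaginary part in `(Ψ - π, Ψ + π]`. -/
def logSector (Ψ : ℝ) (z : ℂ) : ℂ :=
  Complex.log (z * Complex.exp (-(Ψ : ℂ) * Complex.I)) + (Ψ : ℂ) * Complex.I

/-- `z ^ β` using the sector branch of the logarithm. -/
def cpowSector (Ψ : ℝ) (z β : ℂ) : ℂ := Complex.exp (β * logSector Ψ z)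

/-- The filter `|z| → ∞` within the sector. -/
def atInfSector (Ψ ε : ℝ) : Filter ℂ :=
  Filter.comap (fun z : ℂ => ‖z‖) Filter.atTop ⊓ Filter.principal (sector Ψ ε)

/-- A sequence (indexed from 1) is admissible with exponent of convergence `α`. -/
structure Admissible (a : ℕ → ℂ) (α : ℝ) : Prop where
  abs_pos : 0 < ‖a 1‖
  abs_mono : ∀ n, 1 ≤ n → ‖a n‖ ≤ ‖a (n + 1)‖
  abs_tendsto : Filter.Tendsto (fun n => ‖a n‖) Filter.atTop Filter.atTop
  exponent : Filter.limsup
      (fun n : ℕ => ((Real.log n / Real.log ‖a n‖ : ℝ) : EReal))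
      Filter.atTop = (α : EReal)

/-- The `n`-th factor in a Hadamard product of genus `k - 1`. -/
def hadamardFactor (k : ℕ) (w : ℂ) : ℂ :=
  (1 - w) * Complex.exp (∑ j ∈ Finset.Icc 1 (k - 1), (1 / (j : ℂ)) * w ^ j)

end

noncomputable section ShiftedAux
open Polynomial

namespace ShiftedAux

def eb (α : ℝ) (m j : ℕ) : ℂ := ((α - (j : ℝ) / (m : ℝ) : ℝ) : ℂ)

def Pd (d : ℕ → ℕ → ℂ) (M j : ℕ) : Polynomial ℂ :=
  ∑ k ∈ Finset.range (M + 1), Polynomial.C (d j k) * Polynomial.X ^ k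

def Gf (β : ℂ) (n : ℕ) (w : ℂ) : ℂ :=
  Complex.exp (β * Complex.log (1 - w)) * Complex.log (1 - w) ^ n

lemma Pd_eval (d : ℕ → ℕ → ℂ) (M j : ℕ) (u : ℂ) :
    (Pd d M j).eval u = ∑ k ∈ Finset.range (M + 1), d j k * u ^ k := by
  simp [Pd, Polynomial.eval_finset_sum]

lemma sector_ne_zero {Ψ ε : ℝ} {z : ℂ} (h : z ∈ sector Ψ ε) : z ≠ 0 := by
  obtain ⟨r, θ, hr, -, rfl⟩ := h
  exact mul_ne_zero (by exact_mod_cast hr.ne') (Complex.exp_ne_zero _)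

lemma abs_polar (r θ : ℝ) (hr : 0 ≤ r) :
    ‖(r : ℂ) * Complex.exp ((θ : ℂ) * Complex.I)‖ = r := by
  rw [norm_mul, Complex.norm_exp]
  simp [hr]

lemma exp_logSector (Ψ : ℝ) {z : ℂ} (hz : z ≠ 0) :
    Complex.exp (logSector Ψ z) = z := by
  rw [logSector, Complex.exp_add,
    Complex.exp_log (mul_ne_zero hz (Complex.exp_ne_zero _)), mul_assoc,
    ← Complex.exp_add]
  simp

lemma re_logSector (Ψ : ℝ) (z : ℂ) :
    (logSector Ψ z).re = Real.log (‖z‖) := by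
  rw [logSector, Complex.add_re, Complex.log_re, norm_mul, Complex.norm_exp]
  simp

lemma abs_im_logSector (Ψ : ℝ) (z : ℂ) :
    |(logSector Ψ z).im| ≤ Real.pi + |Ψ| := by
  rw [logSector, Complex.add_im, Complex.log_im]
  have h1 := Complex.abs_arg_le_pi (z * Complex.exp (-(Ψ : ℂ) * Complex.I))
  have h2 : ((Ψ : ℂ) * Complex.I).im = Ψ := by simp
  rw [h2]
  calc |Complex.arg _ + Ψ| ≤ |Complex.arg _| + |Ψ| := abs_add_le _ _
    _ ≤ Real.pi + |Ψ| := by linarith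

lemma abs_logSector_le (Ψ : ℝ) {z : ℂ} (hz : 1 ≤ ‖z‖) :
    ‖logSector Ψ z‖ ≤ Real.log (‖z‖) + (Real.pi + |Ψ| + 1) := by
  have h := Complex.norm_le_abs_re_add_abs_im (logSector Ψ z)
  rw [re_logSector] at h
  have h2 := abs_im_logSector Ψ z
  have h3 : 0 ≤ Real.log (‖z‖) := Real.log_nonneg hz
  rw [_root_.abs_of_nonneg h3] at h
  linarith

lemma abs_exp_mul_logSector (b : ℝ) (Ψ : ℝ) {z : ℂ} (hz : z ≠ 0) :
    ‖Complex.exp (((b : ℝ) : ℂ) * logSector Ψ z)‖ = ‖z‖ ^ b := by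
  have hpos : 0 < ‖z‖ := norm_pos_iff.mpr hz
  rw [Complex.norm_exp]
  have : (((b : ℝ) : ℂ) * logSector Ψ z).re = b * Real.log (‖z‖) := by
    rw [Complex.mul_re]
    simp [re_logSector]
  rw [this, Real.rpow_def_of_pos hpos, mul_comm]

lemma tendsto_abs_atInf (Ψ ε : ℝ) :
    Filter.Tendsto (fun z => ‖z‖) (atInfSector Ψ ε) Filter.atTop :=
  tendsto_comap.mono_left inf_le_left

lemma eventually_mem_sector (Ψ ε : ℝ) : ∀ᶠ z in atInfSector Ψ ε, z ∈ sector Ψ ε :=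
  Filter.mem_inf_of_right (Filter.mem_principal_self _)

lemma eventually_unpack {Ψ ε : ℝ} {p : ℂ → Prop}
    (h : ∀ᶠ z in atInfSector Ψ ε, p z) :
    ∃ R : ℝ, ∀ z, R ≤ ‖z‖ → z ∈ sector Ψ ε → p z := by
  rw [atInfSector, Filter.eventually_inf_principal] at h
  obtain ⟨u, hu, hsub⟩ := Filter.mem_comap.mp h
  obtain ⟨R, hR⟩ := Filter.mem_atTop_sets.mp hu
  exact ⟨R, fun z hz hzs => hsub (hR _ hz) hzs⟩

lemma tri_sum (n : ℕ) (f : ℕ → ℕ → ℂ) :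
    ∑ k ∈ Finset.range (n + 1), ∑ i ∈ Finset.range (k + 1), f k i
      = ∑ i ∈ Finset.range (n + 1), ∑ k ∈ Finset.Icc i n, f k i := by
  induction n with
  | zero => simp
  | succ n ih =>
    rw [Finset.sum_range_succ, ih]
    have h1 : ∀ i ∈ Finset.range (n + 1),
        ∑ k ∈ Finset.Icc i (n + 1), f k i = (∑ k ∈ Finset.Icc i n, f k i) + f (n + 1) i := by
      intro i hi
      have := Finset.mem_range.mp hi
      rw [← Finset.sum_Icc_succ_top (by omega : i ≤ n + 1)]
    rw [Finset.sum_range_succ (fun i => ∑ k ∈ Finset.Icc i (n+1), f k i),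
      Finset.sum_congr rfl h1, Finset.sum_add_distrib]
    have h2 : Finset.Icc (n+1) (n+1) = {n+1} := by simp
    rw [h2, Finset.sum_singleton, Finset.sum_range_succ (f (n+1)), add_assoc]

end ShiftedAux
end ShiftedAux

namespace ShiftedAux
open Polynomial Complex Filter Set Asymptotics

lemma poly_zero_of_tendsto : ∀ (n : ℕ) (p : Polynomial ℂ), p.natDegree ≤ n →
    Filter.Tendsto (fun x : ℝ => p.eval ((x : ℝ) : ℂ)) Filter.atTop (nhds 0) → p = 0 := by
  intro n
  induction n with
  | zero =>
    intro p hp h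
    have hc : p = Polynomial.C (p.coeff 0) := Polynomial.eq_C_of_natDegree_le_zero hp
    have h2 : Filter.Tendsto (fun _ : ℝ => p.coeff 0) Filter.atTop (nhds 0) := by
      rw [hc] at h; simpa using h
    have h0 : p.coeff 0 = 0 := tendsto_nhds_unique tendsto_const_nhds h2
    rw [hc, h0]; simp
  | succ n ih =>
    intro p hp h
    set q := p.comp (Polynomial.X + Polynomial.C 1) - p with hq
    have hqev : ∀ x : ℂ, q.eval x = p.eval (x + 1) - p.eval x := by
      intro x; simp [hq, Polynomial.eval_comp]
    have hqt : Filter.Tendsto (fun x : ℝ => q.eval ((x : ℝ) : ℂ)) Filter.atTop (nhds 0) := by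
      have h1 : Filter.Tendsto (fun x : ℝ => p.eval (((x + 1 : ℝ) : ℝ) : ℂ))
          Filter.atTop (nhds 0) := h.comp (tendsto_atTop_add_const_right _ 1 tendsto_id)
      have heq : (fun x : ℝ => q.eval ((x : ℝ) : ℂ))
          = fun x : ℝ => p.eval (((x + 1 : ℝ) : ℝ) : ℂ) - p.eval ((x : ℝ) : ℂ) := by
        funext x; rw [hqev]; push_cast; ring_nf
      rw [heq]
      simpa using h1.sub h
    have hqdeg : q.natDegree ≤ n := by
      rcases eq_or_ne q 0 with h0 | h0
      · simp [h0]
      rcases Nat.eq_zero_or_pos p.natDegree with hd | hd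
      · exfalso; apply h0
        obtain ⟨a, rfl⟩ := Polynomial.natDegree_eq_zero.mp hd
        simp [hq]
      · have hXC : (Polynomial.X + Polynomial.C (1 : ℂ)).natDegree = 1 :=
          Polynomial.natDegree_X_add_C 1
        have hcompdeg : (p.comp (Polynomial.X + Polynomial.C 1)).natDegree = p.natDegree := by
          rw [Polynomial.natDegree_comp, hXC, mul_one]
        have hlead : (p.comp (Polynomial.X + Polynomial.C 1)).coeff p.natDegree
            = p.coeff p.natDegree := by
          have h1 : (p.comp (Polynomial.X + Polynomial.C 1)).leadingCoeff = p.leadingCoeff := by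
            rw [Polynomial.leadingCoeff_comp (by rw [hXC]; exact one_ne_zero),
              Polynomial.Monic.leadingCoeff (Polynomial.monic_X_add_C 1), one_pow, mul_one]
          rwa [Polynomial.leadingCoeff, Polynomial.leadingCoeff, hcompdeg] at h1
        have hcq : q.coeff p.natDegree = 0 := by
          rw [hq, Polynomial.coeff_sub, hlead, sub_self]
        have hle : q.natDegree ≤ p.natDegree := by
          refine le_trans (Polynomial.natDegree_sub_le _ _) ?_
          rw [hcompdeg]; simp
        have hlt : q.natDegree < p.natDegree := by
          rcases lt_or_eq_of_le hle with hlt | heq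
          · exact hlt
          · exfalso; apply h0
            apply Polynomial.leadingCoeff_eq_zero.mp
            rw [Polynomial.leadingCoeff, heq, hcq]
        omega
    have hq0 : q = 0 := ih q hqdeg hqt
    have hstep : ∀ x : ℂ, p.eval (x + 1) = p.eval x := by
      intro x
      have h1 := hqev x
      rw [hq0] at h1
      simp at h1
      exact (sub_eq_zero.mp h1.symm)
    have hnat : ∀ k : ℕ, p.eval ((k : ℂ)) = p.eval 0 := by
      intro k; induction k with
      | zero => simp
      | succ k ih2 => push_cast; rw [hstep]; exact_mod_cast ih2
    have hroots : {x : ℂ | (p - Polynomial.C (p.eval 0)).IsRoot x}.Infinite := by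
      refine Set.Infinite.mono ?_ (Set.infinite_range_of_injective
        (Nat.cast_injective : Function.Injective (Nat.cast : ℕ → ℂ)))
      rintro x ⟨k, rfl⟩
      simp [Polynomial.IsRoot, hnat k]
    have hpc : p = Polynomial.C (p.eval 0) := by
      have h1 := Polynomial.eq_zero_of_infinite_isRoot _ hroots
      have := sub_eq_zero.mp h1
      exact this
    rw [hpc] at h ⊢
    have h0 : p.eval 0 = 0 := by
      have hconst : Filter.Tendsto (fun _ : ℝ => p.eval 0) Filter.atTop (nhds 0) := by
        simpa using h
      exact tendsto_nhds_unique tendsto_const_nhds hconst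
    rw [h0]; simp

lemma rpow_log_tendsto (k : ℕ) {t : ℝ} (ht : t < 0) :
    Filter.Tendsto (fun r : ℝ => r ^ t * Real.log r ^ k) Filter.atTop (nhds 0) := by
  have h1 : (fun r : ℝ => Real.log r ^ k) =o[Filter.atTop] fun r : ℝ => r ^ (-t) := by
    have h2 := isLittleO_log_rpow_rpow_atTop (k : ℝ) (neg_pos.mpr ht)
    refine h2.congr' ?_ (Filter.EventuallyEq.refl _ _)
    filter_upwards with r
    rw [Real.rpow_natCast]
  have h2 := h1.tendsto_div_nhds_zero
  refine h2.congr' ?_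
  filter_upwards [Filter.eventually_gt_atTop (0 : ℝ)] with r hr
  rw [div_eq_mul_inv, Real.rpow_neg hr.le, inv_inv, mul_comm]

lemma logpow_tendsto (p : Polynomial ℂ) {t : ℝ} (ht : t < 0) :
    Filter.Tendsto (fun r : ℝ => ((r ^ t : ℝ) : ℂ) * p.eval ((Real.log r : ℝ) : ℂ))
      Filter.atTop (nhds 0) := by
  have hev : (fun r : ℝ => ((r ^ t : ℝ) : ℂ) * p.eval ((Real.log r : ℝ) : ℂ))
      = fun r : ℝ => ∑ i ∈ Finset.range (p.natDegree + 1),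
          p.coeff i * (((r ^ t * Real.log r ^ i : ℝ)) : ℂ) := by
    funext r
    rw [Polynomial.eval_eq_sum_range, Finset.mul_sum]
    refine Finset.sum_congr rfl fun i _ => ?_
    push_cast; ring
  rw [hev]
  have h0 : Filter.Tendsto (fun r : ℝ => ∑ i ∈ Finset.range (p.natDegree + 1),
      p.coeff i * (((r ^ t * Real.log r ^ i : ℝ)) : ℂ)) Filter.atTop
      (nhds (∑ i ∈ Finset.range (p.natDegree + 1), p.coeff i * ((0 : ℝ) : ℂ))) := by
    refine tendsto_finset_sum _ fun i _ => ?_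
    exact ((Complex.continuous_ofReal.tendsto 0).comp (rpow_log_tendsto i ht)).const_mul _
  simpa using h0

end ShiftedAux
namespace ShiftedAux
open Polynomial Complex Filter Set Asymptotics

lemma ind_lemma (m : ℕ) (hm : 1 ≤ m) (α : ℝ) (N : ℕ) (A : ℕ → Polynomial ℂ)
    (h : (fun r : ℝ => ∑ j ∈ Finset.range (N + 1),
        ((r ^ (α - (j : ℝ) / (m : ℝ)) : ℝ) : ℂ) * (A j).eval ((Real.log r : ℝ) : ℂ))
      =o[Filter.atTop] fun r : ℝ => r ^ (α - (N : ℝ) / (m : ℝ))) :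
    ∀ j, j ≤ N → A j = 0 := by
  intro j0
  induction j0 using Nat.strong_induction_on with
  | _ j0 ih =>
  intro hj0
  have hzero : ∀ j, j < j0 → A j = 0 := fun j hj => ih j hj (by omega)
  have hsum : ∀ r : ℝ, ∑ j ∈ Finset.range (N + 1),
      ((r ^ (α - (j : ℝ) / (m : ℝ)) : ℝ) : ℂ) * (A j).eval ((Real.log r : ℝ) : ℂ)
      = ∑ j ∈ Finset.Ico j0 (N + 1),
      ((r ^ (α - (j : ℝ) / (m : ℝ)) : ℝ) : ℂ) * (A j).eval ((Real.log r : ℝ) : ℂ) := by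
    intro r
    rw [Finset.range_eq_Ico,
      ← Finset.sum_Ico_consecutive _ (Nat.zero_le j0) (by omega : j0 ≤ N + 1)]
    have hz : (∑ j ∈ Finset.Ico 0 j0,
        ((r ^ (α - (j : ℝ) / (m : ℝ)) : ℝ) : ℂ) * (A j).eval ((Real.log r : ℝ) : ℂ)) = 0 := by
      refine Finset.sum_eq_zero fun j hj => ?_
      rw [hzero j (Finset.mem_Ico.mp hj).2]; simp
    rw [hz, zero_add]
  have hO : (fun r : ℝ => ((r ^ (-(α - (j0 : ℝ) / (m : ℝ))) : ℝ) : ℂ)) =O[Filter.atTop]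
      fun r : ℝ => r ^ (-(α - (j0 : ℝ) / (m : ℝ))) :=
    Asymptotics.isBigO_of_le _ fun r => le_of_eq (Complex.norm_real _)
  have hmul := (h.congr' (Filter.Eventually.of_forall hsum)
    (Filter.EventuallyEq.refl _ _)).mul_isBigO hO
  have h2 : (fun r : ℝ => ∑ j ∈ Finset.Ico j0 (N + 1),
      ((r ^ (((j0 : ℝ) - j) / (m : ℝ)) : ℝ) : ℂ) * (A j).eval ((Real.log r : ℝ) : ℂ))
      =o[Filter.atTop] fun r : ℝ => r ^ (((j0 : ℝ) - N) / (m : ℝ)) := by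
    refine hmul.congr' ?_ ?_
    · filter_upwards [Filter.eventually_gt_atTop (0 : ℝ)] with r hr
      rw [Finset.sum_mul]
      refine Finset.sum_congr rfl fun j hj => ?_
      rw [mul_right_comm, ← Complex.ofReal_mul, ← Real.rpow_add hr]
      have he : α - (j : ℝ) / (m : ℝ) + -(α - (j0 : ℝ) / (m : ℝ)) = ((j0 : ℝ) - j) / (m : ℝ) := by
        ring
      rw [he]
    · filter_upwards [Filter.eventually_gt_atTop (0 : ℝ)] with r hr
      rw [← Real.rpow_add hr]
      have he : α - (N : ℝ) / (m : ℝ) + -(α - (j0 : ℝ) / (m : ℝ)) = ((j0 : ℝ) - N) / (m : ℝ) := by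
        ring
      rw [he]
  have h3 : Filter.Tendsto (fun r : ℝ => ∑ j ∈ Finset.Ico j0 (N + 1),
      ((r ^ (((j0 : ℝ) - j) / (m : ℝ)) : ℝ) : ℂ) * (A j).eval ((Real.log r : ℝ) : ℂ))
      Filter.atTop (nhds 0) := by
    rw [← Asymptotics.isLittleO_one_iff ℝ]
    refine h2.trans_isBigO (Asymptotics.IsBigO.of_bound 1 ?_)
    filter_upwards [Filter.eventually_ge_atTop (1 : ℝ)] with r hr
    have hle : r ^ (((j0 : ℝ) - N) / (m : ℝ)) ≤ 1 := by
      refine Real.rpow_le_one_of_one_le_of_nonpos hr ?_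
      have : (j0 : ℝ) ≤ (N : ℝ) := by exact_mod_cast hj0
      have hm0 : (0 : ℝ) < (m : ℝ) := by exact_mod_cast hm
      apply div_nonpos_of_nonpos_of_nonneg <;> linarith
    have hnn : 0 ≤ r ^ (((j0 : ℝ) - N) / (m : ℝ)) := Real.rpow_nonneg (by linarith) _
    simpa [Real.norm_eq_abs, _root_.abs_of_nonneg hnn] using hle
  have htail : Filter.Tendsto (fun r : ℝ => ∑ j ∈ Finset.Ico (j0 + 1) (N + 1),
      ((r ^ (((j0 : ℝ) - j) / (m : ℝ)) : ℝ) : ℂ) * (A j).eval ((Real.log r : ℝ) : ℂ))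
      Filter.atTop (nhds 0) := by
    have h0 : Filter.Tendsto (fun r : ℝ => ∑ j ∈ Finset.Ico (j0 + 1) (N + 1),
        ((r ^ (((j0 : ℝ) - j) / (m : ℝ)) : ℝ) : ℂ) * (A j).eval ((Real.log r : ℝ) : ℂ))
        Filter.atTop (nhds (∑ j ∈ Finset.Ico (j0 + 1) (N + 1), 0)) := by
      refine tendsto_finset_sum _ fun j hj => ?_
      have hj' := (Finset.mem_Ico.mp hj).1
      refine logpow_tendsto (A j) ?_
      have : (j0 : ℝ) < (j : ℝ) := by exact_mod_cast hj'
      have hm0 : (0 : ℝ) < (m : ℝ) := by exact_mod_cast hm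
      apply div_neg_of_neg_of_pos <;> linarith
    simpa using h0
  rcases lt_or_ge N j0 with hlt | hge
  · -- j0 ≤ N so this can't happen
    omega
  have hhead : Filter.Tendsto (fun r : ℝ =>
      ((r ^ (((j0 : ℝ) - j0) / (m : ℝ)) : ℝ) : ℂ) * (A j0).eval ((Real.log r : ℝ) : ℂ))
      Filter.atTop (nhds 0) := by
    have hsplit : ∀ r : ℝ, ∑ j ∈ Finset.Ico j0 (N + 1),
        ((r ^ (((j0 : ℝ) - j) / (m : ℝ)) : ℝ) : ℂ) * (A j).eval ((Real.log r : ℝ) : ℂ)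
        = ((r ^ (((j0 : ℝ) - j0) / (m : ℝ)) : ℝ) : ℂ) * (A j0).eval ((Real.log r : ℝ) : ℂ)
          + ∑ j ∈ Finset.Ico (j0 + 1) (N + 1),
            ((r ^ (((j0 : ℝ) - j) / (m : ℝ)) : ℝ) : ℂ) * (A j).eval ((Real.log r : ℝ) : ℂ) :=
      fun r => Finset.sum_eq_sum_Ico_succ_bot (by omega : j0 < N + 1) _
    have := h3.sub htail
    rw [sub_zero] at this
    refine this.congr fun r => ?_
    rw [hsplit r]; ring
  have hfin0 : Filter.Tendsto (fun r : ℝ => (A j0).eval ((Real.log r : ℝ) : ℂ))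
      Filter.atTop (nhds 0) := by
    refine hhead.congr fun r => ?_
    rw [sub_self, zero_div, Real.rpow_zero]
    simp
  have hfin : Filter.Tendsto (fun x : ℝ => (A j0).eval ((x : ℝ) : ℂ)) Filter.atTop (nhds 0) := by
    have hcomp := hfin0.comp Real.tendsto_exp_atTop
    refine hcomp.congr fun x => ?_
    simp [Function.comp, Real.log_exp]
  exact poly_zero_of_tendsto (A j0).natDegree (A j0) le_rfl hfin

lemma loglittle (C : ℝ) (M : ℕ) {δ γ : ℝ} (h : δ < γ) :
    (fun r : ℝ => (Real.log r + C) ^ M * r ^ δ) =o[Filter.atTop] fun r : ℝ => r ^ γ := by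
  have h2 : (fun r : ℝ => (Real.log r) ^ M) =o[Filter.atTop] fun r : ℝ => r ^ (γ - δ) := by
    have h3 := isLittleO_log_rpow_rpow_atTop (M : ℝ) (by linarith : (0 : ℝ) < γ - δ)
    refine h3.congr' ?_ (Filter.EventuallyEq.refl _ _)
    filter_upwards with r
    rw [Real.rpow_natCast]
  have h1 : (fun r : ℝ => (Real.log r + C) ^ M) =o[Filter.atTop] fun r : ℝ => r ^ (γ - δ) := by
    refine Asymptotics.IsBigO.trans_isLittleO ?_ h2
    refine Asymptotics.IsBigO.of_bound (2 ^ M) ?_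
    filter_upwards [Real.tendsto_log_atTop.eventually_ge_atTop (max 1 |C|)] with r hr
    have h1l : (1 : ℝ) ≤ Real.log r := le_trans (le_max_left _ _) hr
    have hCl : |C| ≤ Real.log r := le_trans (le_max_right _ _) hr
    rw [Real.norm_eq_abs, Real.norm_eq_abs, _root_.abs_pow, _root_.abs_pow]
    have habs : |Real.log r + C| ≤ 2 * Real.log r := by
      calc |Real.log r + C| ≤ |Real.log r| + |C| := abs_add_le _ _
        _ ≤ Real.log r + Real.log r := by
            rw [_root_.abs_of_nonneg (by linarith : (0:ℝ) ≤ Real.log r)]; linarith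
        _ = 2 * Real.log r := by ring
    calc |Real.log r + C| ^ M ≤ (2 * Real.log r) ^ M :=
          pow_le_pow_left₀ (abs_nonneg _) habs M
      _ = 2 ^ M * Real.log r ^ M := mul_pow _ _ _
      _ ≤ 2 ^ M * |Real.log r| ^ M := by
          rw [_root_.abs_of_nonneg (by linarith : (0:ℝ) ≤ Real.log r)]
  have hmul := h1.mul_isBigO (Asymptotics.isBigO_refl (fun r : ℝ => r ^ δ) Filter.atTop)
  refine hmul.congr' (Filter.EventuallyEq.refl _ _) ?_
  filter_upwards [Filter.eventually_gt_atTop (0 : ℝ)] with r hr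
  rw [← Real.rpow_add hr]
  norm_num

lemma logo {l : Filter ℂ} (hl : Filter.Tendsto (fun z => ‖z‖) l Filter.atTop)
    (C : ℝ) (M : ℕ) {δ γ : ℝ} (h : δ < γ) :
    (fun z : ℂ => (Real.log (‖z‖) + C) ^ M * ‖z‖ ^ δ) =o[l]
      fun z : ℂ => ‖z‖ ^ γ :=
  (loglittle C M h).comp_tendsto hl

lemma basis_isBigO {l : Filter ℂ} (hl : Filter.Tendsto (fun z => ‖z‖) l Filter.atTop)
    (Ψ : ℝ) (b : ℝ) {i M : ℕ} (hi : i ≤ M) :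
    (fun z => Complex.exp (((b : ℝ) : ℂ) * logSector Ψ z) * logSector Ψ z ^ i) =O[l]
      fun z => (Real.log (‖z‖) + (Real.pi + |Ψ| + 1)) ^ M * ‖z‖ ^ b := by
  refine Asymptotics.IsBigO.of_bound 1 ?_
  filter_upwards [hl.eventually_ge_atTop 1] with z hz
  have hz0 : z ≠ 0 := by
    intro h0; rw [h0] at hz; simp at hz; linarith
  have hlog0 : 0 ≤ Real.log (‖z‖) := Real.log_nonneg hz
  have hpi := Real.pi_pos
  have haΨ := abs_nonneg Ψ
  have hbase1 : 1 ≤ Real.log (‖z‖) + (Real.pi + |Ψ| + 1) := by linarith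
  have hθ : ‖logSector Ψ z‖ ≤ Real.log (‖z‖) + (Real.pi + |Ψ| + 1) :=
    abs_logSector_le Ψ hz
  rw [norm_mul, norm_pow,
    abs_exp_mul_logSector b Ψ hz0, one_mul, Real.norm_eq_abs,
    _root_.abs_of_nonneg (by positivity)]
  rw [mul_comm ((Real.log (‖z‖) + (Real.pi + |Ψ| + 1)) ^ M) (‖z‖ ^ b)]
  refine mul_le_mul_of_nonneg_left ?_ (Real.rpow_nonneg (norm_nonneg z) b)
  calc ‖logSector Ψ z‖ ^ i
      ≤ (Real.log (‖z‖) + (Real.pi + |Ψ| + 1)) ^ i :=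
        pow_le_pow_left₀ (norm_nonneg _) hθ i
    _ ≤ (Real.log (‖z‖) + (Real.pi + |Ψ| + 1)) ^ M :=
        pow_le_pow_right₀ hbase1 hi

lemma basis_littleO {l : Filter ℂ} (hl : Filter.Tendsto (fun z => ‖z‖) l Filter.atTop)
    (Ψ : ℝ) {b γ : ℝ} (hb : b < γ) {i M : ℕ} (hi : i ≤ M) :
    (fun z => Complex.exp (((b : ℝ) : ℂ) * logSector Ψ z) * logSector Ψ z ^ i) =o[l]
      fun z => ‖z‖ ^ γ :=
  (basis_isBigO hl Ψ b hi).trans_isLittleO (logo hl _ M hb)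

end ShiftedAux
namespace ShiftedAux
open Polynomial Complex Filter Set Asymptotics

lemma Gf_analytic (β : ℂ) (n : ℕ) : AnalyticAt ℂ (Gf β n) 0 := by
  have hlog : AnalyticAt ℂ (fun w : ℂ => Complex.log (1 - w)) 0 := by
    have h1 : AnalyticAt ℂ Complex.log ((1 : ℂ) - 0) :=
      analyticAt_clog (by simp)
    exact h1.comp (analyticAt_const.sub analyticAt_id)
  exact ((analyticAt_const.mul hlog).cexp).mul (hlog.pow n)

lemma Gf_expansion (β : ℂ) (n : ℕ) : ∃ q : ℕ → ℂ, q 0 = (if n = 0 then (1 : ℂ) else 0) ∧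
    ∀ T : ℕ, (fun w : ℂ => Gf β n w - ∑ t ∈ Finset.range T, q t * w ^ t)
      =O[nhds (0 : ℂ)] fun w => ‖w‖ ^ T := by
  obtain ⟨p, hp⟩ := Gf_analytic β n
  refine ⟨fun t => p.coeff t, ?_, ?_⟩
  · show p.coeff 0 = _
    have h0 : p.coeff 0 = Gf β n 0 := by
      have := hp.coeff_zero (fun _ => 1)
      rw [← this]
      rfl
    rw [h0]
    simp only [Gf, sub_zero, Complex.log_one, mul_zero, Complex.exp_zero, one_mul]
    cases n with
    | zero => simp
    | succ n => simp
  · intro T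
    have h1 := hp.isBigO_sub_partialSum_pow T
    refine h1.congr' ?_ (Filter.EventuallyEq.refl _ _)
    filter_upwards with w
    rw [zero_add]
    congr 1
    rw [FormalMultilinearSeries.partialSum]
    refine Finset.sum_congr rfl fun t _ => ?_
    rw [FormalMultilinearSeries.apply_eq_pow_smul_coeff, smul_eq_mul]
    ring

lemma arg_polar {r θ : ℝ} (hr : 0 < r) (h1 : -Real.pi < θ) (h2 : θ ≤ Real.pi) :
    Complex.arg ((r : ℂ) * Complex.exp ((θ : ℂ) * Complex.I)) = θ := by
  rw [Complex.exp_mul_I, Complex.arg_real_mul _ hr]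
  exact Complex.arg_cos_add_sin_mul_I ⟨h1, h2⟩

lemma logSector_polar (Ψ : ℝ) {r φ : ℝ} (hr : 0 < r) (h1 : -Real.pi < φ) (h2 : φ ≤ Real.pi) :
    logSector Ψ ((r : ℂ) * Complex.exp (((Ψ + φ : ℝ) : ℂ) * Complex.I))
      = ((Real.log r : ℝ) : ℂ) + ((Ψ + φ : ℝ) : ℂ) * Complex.I := by
  rw [logSector]
  have hprod : ((r : ℂ) * Complex.exp (((Ψ + φ : ℝ) : ℂ) * Complex.I))
      * Complex.exp (-(Ψ : ℂ) * Complex.I)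
      = (r : ℂ) * Complex.exp ((φ : ℝ) * Complex.I) := by
    rw [mul_assoc, ← Complex.exp_add]
    congr 2
    push_cast
    ring
  rw [hprod, Complex.log_ofReal_mul hr (Complex.exp_ne_zero _)]
  have hle : Complex.log (Complex.exp (((φ : ℝ) : ℂ) * Complex.I)) = ((φ : ℝ) : ℂ) * Complex.I := by
    refine Complex.log_exp ?_ ?_ <;> simp [h1, h2]
  rw [hle]
  push_cast
  ring

lemma sector_eq_bad {Ψ ε : ℝ} (hΨ : Ψ ∈ Set.Ico (-Real.pi) Real.pi) (hε : Real.pi < ε) :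
    sector Ψ ε = {z : ℂ | z ≠ 0} := by
  ext z
  constructor
  · intro hz
    exact sector_ne_zero hz
  · intro hz
    have ha1 := Complex.neg_pi_lt_arg z
    have ha2 := Complex.arg_le_pi z
    obtain ⟨hΨ1, hΨ2⟩ := hΨ
    have habs : 0 < ‖z‖ := norm_pos_iff.mpr hz
    have hz' : z = (‖z‖ : ℂ) * Complex.exp ((Complex.arg z : ℂ) * Complex.I) := by
      rw [Complex.norm_mul_exp_arg_mul_I]
    set a := Complex.arg z with hadef
    rcases lt_or_ge Real.pi (a - Ψ) with hc1 | hc1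
    · refine ⟨‖z‖, a - 2 * Real.pi, habs, ⟨by linarith, by linarith⟩, ?_⟩
      have h2pi : Complex.exp (((2 * Real.pi : ℝ) : ℂ) * Complex.I) = 1 := by
        push_cast
        exact Complex.exp_two_pi_mul_I
      have hexp : Complex.exp (((a - 2 * Real.pi : ℝ) : ℂ) * Complex.I)
          = Complex.exp ((a : ℂ) * Complex.I) := by
        have harg : ((a - 2 * Real.pi : ℝ) : ℂ) * Complex.I
            = (a : ℂ) * Complex.I - ((2 * Real.pi : ℝ) : ℂ) * Complex.I := by push_cast; ring
        rw [harg, Complex.exp_sub, h2pi, div_one]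
      rw [hexp]
      exact hz'
    · rcases le_or_gt (a - Ψ) (-Real.pi) with hc2 | hc2
      · refine ⟨‖z‖, a + 2 * Real.pi, habs, ⟨by linarith, by linarith⟩, ?_⟩
        have h2pi : Complex.exp (((2 * Real.pi : ℝ) : ℂ) * Complex.I) = 1 := by
          push_cast
          exact Complex.exp_two_pi_mul_I
        have hexp : Complex.exp (((a + 2 * Real.pi : ℝ) : ℂ) * Complex.I)
            = Complex.exp ((a : ℂ) * Complex.I) := by
          have harg : ((a + 2 * Real.pi : ℝ) : ℂ) * Complex.I
              = (a : ℂ) * Complex.I + ((2 * Real.pi : ℝ) : ℂ) * Complex.I := by push_cast; ring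
          rw [harg, Complex.exp_add, h2pi, mul_one]
        rw [hexp]
        exact hz'
      · exact ⟨‖z‖, a, habs, ⟨by linarith, by linarith⟩, hz'⟩

lemma tendsto_cdiv (Ψ ε : ℝ) (c : ℂ) :
    Filter.Tendsto (fun z : ℂ => c / z) (atInfSector Ψ ε) (nhds 0) := by
  have habs := tendsto_abs_atInf Ψ ε
  have hinv : Filter.Tendsto (fun z : ℂ => z⁻¹) (atInfSector Ψ ε) (nhds 0) := by
    rw [tendsto_zero_iff_norm_tendsto_zero]
    have h1 : Filter.Tendsto (fun z : ℂ => (‖z‖)⁻¹) (atInfSector Ψ ε) (nhds 0) :=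
      habs.inv_tendsto_atTop
    refine h1.congr fun z => ?_
    rw [norm_inv]
  have := hinv.const_mul c
  simpa [div_eq_mul_inv] using this

lemma tendsto_sub_c {Ψ ε ε' R₀ : ℝ} {c : ℂ}
    (hshift : ∀ z ∈ sector Ψ ε', R₀ ≤ ‖z‖ → z - c ∈ sector Ψ ε) :
    Filter.Tendsto (fun z : ℂ => z - c) (atInfSector Ψ ε') (atInfSector Ψ ε) := by
  unfold atInfSector
  rw [Filter.tendsto_inf]
  constructor
  · rw [Filter.tendsto_comap_iff]
    have h1 : Filter.Tendsto (fun z : ℂ => ‖z‖ - ‖c‖)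
        (atInfSector Ψ ε') Filter.atTop :=
      Filter.tendsto_atTop_add_const_right _ _ (tendsto_abs_atInf Ψ ε')
    refine Filter.tendsto_atTop_mono' _ ?_ h1
    filter_upwards with z
    have := norm_sub_norm_le z c
    simpa using this
  · rw [Filter.tendsto_principal]
    filter_upwards [eventually_mem_sector Ψ ε', (tendsto_abs_atInf Ψ ε').eventually_ge_atTop R₀]
      with z hz hR
    exact hshift z hz hR

lemma shifted_rpow_isBigO (Ψ ε' : ℝ) (c : ℂ) (γ : ℝ) :
    (fun z : ℂ => ‖z - c‖ ^ γ) =O[atInfSector Ψ ε']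
      fun z : ℂ => ‖z‖ ^ γ := by
  refine Asymptotics.IsBigO.of_bound (2 ^ |γ|) ?_
  filter_upwards [(tendsto_abs_atInf Ψ ε').eventually_ge_atTop (2 * ‖c‖ + 2)]
    with z hz
  have hcabs : 0 ≤ ‖c‖ := norm_nonneg c
  have hz1 : (1 : ℝ) ≤ ‖z‖ := by linarith
  have hzpos : (0 : ℝ) < ‖z‖ := by linarith
  have hlow : ‖z‖ / 2 ≤ ‖z - c‖ := by
    have h1 : ‖z‖ - ‖c‖ ≤ ‖z - c‖ := by
      have := norm_sub_norm_le z c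
      simpa using this
    linarith [hz]
  have hhigh : ‖z - c‖ ≤ 2 * ‖z‖ := by
    have h1 : ‖z - c‖ ≤ ‖z‖ + ‖c‖ := by
      simpa [sub_eq_add_neg] using norm_add_le z (-c)
    linarith
  have hpos' : (0 : ℝ) < ‖z - c‖ := by
    have : (0:ℝ) < ‖z‖ / 2 := by linarith
    linarith [hlow]
  rw [Real.norm_eq_abs, Real.norm_eq_abs, _root_.abs_of_nonneg (Real.rpow_nonneg hpos'.le _),
    _root_.abs_of_nonneg (Real.rpow_nonneg hzpos.le _)]
  rcases le_or_gt 0 γ with hγ | hγ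
  · calc ‖z - c‖ ^ γ ≤ (2 * ‖z‖) ^ γ :=
          Real.rpow_le_rpow hpos'.le hhigh hγ
      _ = 2 ^ γ * ‖z‖ ^ γ := Real.mul_rpow (by norm_num) hzpos.le
      _ ≤ 2 ^ |γ| * ‖z‖ ^ γ := by
          have : (2:ℝ) ^ γ ≤ 2 ^ |γ| :=
            Real.rpow_le_rpow_of_exponent_le (by norm_num) (le_abs_self γ)
          exact mul_le_mul_of_nonneg_right this (Real.rpow_nonneg hzpos.le _)
  · calc ‖z - c‖ ^ γ ≤ (‖z‖ / 2) ^ γ := by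
          refine Real.rpow_le_rpow_of_nonpos (by linarith) hlow hγ.le
      _ = 2 ^ (-γ) * ‖z‖ ^ γ := by
          rw [div_eq_mul_inv, Real.mul_rpow hzpos.le (by norm_num), mul_comm]
          congr 1
          rw [Real.inv_rpow (by norm_num), ← Real.rpow_neg (by norm_num)]
      _ ≤ 2 ^ |γ| * ‖z‖ ^ γ := by
          have : (2:ℝ) ^ (-γ) ≤ 2 ^ |γ| := by
            refine Real.rpow_le_rpow_of_exponent_le (by norm_num) ?_
            rw [abs_of_neg hγ]
          exact mul_le_mul_of_nonneg_right this (Real.rpow_nonneg hzpos.le _)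

end ShiftedAux
namespace ShiftedAux
open Polynomial Complex Filter Set Asymptotics

lemma good_branch (Ψ ε' : ℝ) (c : ℂ) (hπ : ε' < Real.pi) :
    ∀ᶠ z in atInfSector Ψ ε', logSector Ψ (z - c) = logSector Ψ z + Complex.log (1 - c / z) := by
  have hargt : Filter.Tendsto (fun z : ℂ => Complex.arg (1 - c / z)) (atInfSector Ψ ε')
      (nhds 0) := by
    have h1 : Filter.Tendsto (fun z : ℂ => 1 - c / z) (atInfSector Ψ ε') (nhds 1) := by
      have h2 := (tendsto_cdiv Ψ ε' c).const_sub 1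
      simpa using h2
    have h2 : ContinuousAt Complex.arg 1 := Complex.continuousAt_arg (by simp)
    have h3 := h2.tendsto.comp h1
    simpa [Function.comp_def] using h3
  have hgap : 0 < Real.pi - ε' := by linarith
  have hsmall := (Metric.tendsto_nhds.mp hargt) _ hgap
  have hcz := (Metric.tendsto_nhds.mp (tendsto_cdiv Ψ ε' c)) 1 one_pos
  filter_upwards [eventually_mem_sector Ψ ε', hsmall, hcz] with z hz hsm hcz1
  rw [Real.dist_eq, sub_zero] at hsm
  rw [Complex.dist_eq, sub_zero] at hcz1
  obtain ⟨r, θ₀, hr, hθ, rfl⟩ := hz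
  set z := (r : ℂ) * Complex.exp ((θ₀ : ℂ) * Complex.I) with hzdef
  have hz0 : z ≠ 0 := mul_ne_zero (by exact_mod_cast hr.ne') (Complex.exp_ne_zero _)
  have hb0 : (1 : ℂ) - c / z ≠ 0 := by
    intro h0
    rw [sub_eq_zero] at h0
    rw [← h0] at hcz1
    simp at hcz1
  have hza0 : z * Complex.exp (-(Ψ : ℂ) * Complex.I) ≠ 0 :=
    mul_ne_zero hz0 (Complex.exp_ne_zero _)
  have harga : Complex.arg (z * Complex.exp (-(Ψ : ℂ) * Complex.I)) = θ₀ - Ψ := by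
    have hform : z * Complex.exp (-(Ψ : ℂ) * Complex.I)
        = (r : ℂ) * Complex.exp (((θ₀ - Ψ : ℝ) : ℂ) * Complex.I) := by
      rw [hzdef, mul_assoc, ← Complex.exp_add]
      congr 2
      push_cast
      ring
    rw [hform]
    exact arg_polar hr (by obtain ⟨h1, h2⟩ := hθ; linarith) (by obtain ⟨h1, h2⟩ := hθ; linarith)
  have hθb : |θ₀ - Ψ| < ε' := by
    obtain ⟨h1, h2⟩ := hθ
    rw [abs_lt]; constructor <;> linarith
  have hzc : (z - c) * Complex.exp (-(Ψ : ℂ) * Complex.I)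
      = (z * Complex.exp (-(Ψ : ℂ) * Complex.I)) * (1 - c / z) := by
    field_simp
  have hargsum : Complex.arg (z * Complex.exp (-(Ψ : ℂ) * Complex.I))
      + Complex.arg (1 - c / z) ∈ Set.Ioc (-Real.pi) Real.pi := by
    rw [harga]
    have h1 := abs_lt.mp hθb
    have h2 := abs_lt.mp hsm
    constructor <;> [linarith [h1.1, h2.1]; linarith [h1.2, h2.2]]
  rw [logSector, logSector, hzc, Complex.log_mul hza0 hb0 hargsum]
  ring

lemma block_sum (Ψ : ℝ) (d : ℕ → ℕ → ℂ) (M : ℕ) (j : ℕ) (β : ℂ) (w : ℂ) :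
    ∑ k ∈ Finset.range (M + 1), d j k * Complex.exp (β * logSector Ψ w) * logSector Ψ w ^ k
      = Complex.exp (β * logSector Ψ w) * (Pd d M j).eval (logSector Ψ w) := by
  rw [Pd_eval, Finset.mul_sum]
  exact Finset.sum_congr rfl fun k _ => by ring

lemma zinv {β : ℂ} {P : Polynomial ℂ}
    (hstep : ∀ u : ℂ, Complex.exp (β * (u + 2 * Real.pi * Complex.I))
        * P.eval (u + 2 * Real.pi * Complex.I)
      = Complex.exp (β * u) * P.eval u) :
    ∀ (n : ℤ) (u : ℂ), Complex.exp (β * (u + n * (2 * Real.pi * Complex.I)))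
        * P.eval (u + n * (2 * Real.pi * Complex.I))
      = Complex.exp (β * u) * P.eval u := by
  intro n
  induction n using Int.induction_on with
  | zero => intro u; simp
  | succ k ih =>
    intro u
    have h1 := hstep (u + (k : ℤ) * (2 * Real.pi * Complex.I))
    have harg : u + ((k : ℤ) + 1 : ℤ) * (2 * Real.pi * Complex.I)
        = (u + (k : ℤ) * (2 * Real.pi * Complex.I)) + 2 * Real.pi * Complex.I := by
      push_cast
      ring
    rw [harg, h1, ih u]
  | pred k ih =>
    intro u
    have h1 := hstep (u + (-(k : ℤ) - 1 : ℤ) * (2 * Real.pi * Complex.I))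
    have harg : (u + (-(k : ℤ) - 1 : ℤ) * (2 * Real.pi * Complex.I)) + 2 * Real.pi * Complex.I
        = u + (-(k : ℤ) : ℤ) * (2 * Real.pi * Complex.I) := by
      push_cast
      ring
    rw [harg] at h1
    rw [← ih u, ← h1]
end ShiftedAux
namespace ShiftedAux
open Polynomial Complex Filter Set Asymptotics

set_option maxHeartbeats 2000000 in
lemma bad_inv (α : ℝ) (m M : ℕ) (Ψ ε : ℝ) (L : ℂ → ℂ) (d : ℕ → ℕ → ℂ)
    (hm : 1 ≤ m) (hΨ : Ψ ∈ Set.Ico (-Real.pi) Real.pi) (hε : Real.pi < ε)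
    (hL : DifferentiableOn ℂ L (sector Ψ ε))
    (hasymp : ∀ N : ℕ, (fun z : ℂ => L z - ∑ j ∈ Finset.range (N + 1),
        ∑ k ∈ Finset.range (M + 1),
          d j k * cpowSector Ψ z ((α - (j : ℝ) / (m : ℝ) : ℝ) : ℂ) * logSector Ψ z ^ k)
      =o[atInfSector Ψ ε] fun z : ℂ => ‖z‖ ^ (α - (N : ℝ) / (m : ℝ))) :
    ∀ (J : ℕ) (u : ℂ),
      Complex.exp (eb α m J * (u + 2 * Real.pi * Complex.I))
          * (Pd d M J).eval (u + 2 * Real.pi * Complex.I)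
        = Complex.exp (eb α m J * u) * (Pd d M J).eval u := by
  have hπ := Real.pi_pos
  have hsec : sector Ψ ε = {z : ℂ | z ≠ 0} := sector_eq_bad hΨ hε
  have hopen : IsOpen (sector Ψ ε) := by rw [hsec]; exact isOpen_ne
  intro J
  set φp : ℝ := Ψ + Real.pi with hφp
  set φm : ℝ := Ψ - Real.pi with hφm
  set A : ℕ → Polynomial ℂ := fun j =>
    Polynomial.C (Complex.exp (eb α m j * ((φp : ℂ) * Complex.I)))
      * (Pd d M j).comp (Polynomial.X + Polynomial.C ((φp : ℂ) * Complex.I))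
    - Polynomial.C (Complex.exp (eb α m j * ((φm : ℂ) * Complex.I)))
      * (Pd d M j).comp (Polynomial.X + Polynomial.C ((φm : ℂ) * Complex.I)) with hA
  -- the two boundary-value functions
  set V : ℝ → ℝ → ℂ := fun φ r => ∑ j ∈ Finset.range (J + 1), ∑ k ∈ Finset.range (M + 1),
    d j k * Complex.exp (eb α m j * (((Real.log r : ℝ) : ℂ) + (φ : ℂ) * Complex.I))
      * (((Real.log r : ℝ) : ℂ) + (φ : ℂ) * Complex.I) ^ k with hV
  -- Hsum
  set Hs : ℂ → ℂ := fun w => ∑ j ∈ Finset.range (J + 1), ∑ k ∈ Finset.range (M + 1),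
    d j k * cpowSector Ψ w ((α - (j : ℝ) / (m : ℝ) : ℝ) : ℂ) * logSector Ψ w ^ k with hHs
  -- Step 1: the little-o estimate for V φp - V φm
  have hVo : (fun r : ℝ => ∑ j ∈ Finset.range (J + 1),
      ((r ^ (α - (j : ℝ) / (m : ℝ)) : ℝ) : ℂ) * (A j).eval ((Real.log r : ℝ) : ℂ))
      =o[Filter.atTop] fun r : ℝ => r ^ (α - (J : ℝ) / (m : ℝ)) := by
    -- first identify the sum with V φp - V φm
    have hfeq : ∀ r : ℝ, 0 < r → ∑ j ∈ Finset.range (J + 1),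
        ((r ^ (α - (j : ℝ) / (m : ℝ)) : ℝ) : ℂ) * (A j).eval ((Real.log r : ℝ) : ℂ)
        = V φp r - V φm r := by
      intro r hr
      rw [hV]
      simp only
      rw [← Finset.sum_sub_distrib]
      refine Finset.sum_congr rfl fun j _ => ?_
      have hexp : ∀ φ : ℝ, Complex.exp (eb α m j * (((Real.log r : ℝ) : ℂ) + (φ : ℂ) * Complex.I))
          = ((r ^ (α - (j : ℝ) / (m : ℝ)) : ℝ) : ℂ)
            * Complex.exp (eb α m j * ((φ : ℂ) * Complex.I)) := by
        intro φ
        rw [mul_add, Complex.exp_add]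
        congr 1
        rw [eb]
        rw [← Complex.ofReal_mul, ← Complex.ofReal_exp]
        congr 1
        rw [Real.rpow_def_of_pos hr, mul_comm]
      have hsum : ∀ φ : ℝ, ∑ k ∈ Finset.range (M + 1),
          d j k * Complex.exp (eb α m j * (((Real.log r : ℝ) : ℂ) + (φ : ℂ) * Complex.I))
            * (((Real.log r : ℝ) : ℂ) + (φ : ℂ) * Complex.I) ^ k
          = ((r ^ (α - (j : ℝ) / (m : ℝ)) : ℝ) : ℂ)
            * (Complex.exp (eb α m j * ((φ : ℂ) * Complex.I))
              * (Pd d M j).eval (((Real.log r : ℝ) : ℂ) + (φ : ℂ) * Complex.I)) := by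
        intro φ
        rw [Pd_eval, Finset.mul_sum, Finset.mul_sum]
        refine Finset.sum_congr rfl fun k _ => ?_
        rw [hexp φ]
        ring
      rw [hsum φp, hsum φm, hA]
      simp only [Polynomial.eval_sub, Polynomial.eval_mul, Polynomial.eval_C,
        Polynomial.eval_comp, Polynomial.eval_add, Polynomial.eval_X]
      ring
    rw [Asymptotics.isLittleO_iff]
    intro C hC
    have hC4 : 0 < C / 4 := by linarith
    obtain ⟨R, hR⟩ := eventually_unpack ((Asymptotics.isLittleO_iff.mp (hasymp J)) hC4)
    filter_upwards [Filter.eventually_ge_atTop (max R 1)] with r hr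
    have hr1 : (1 : ℝ) ≤ r := le_trans (le_max_right _ _) hr
    have hrR : R ≤ r := le_trans (le_max_left _ _) hr
    have hr0 : (0 : ℝ) < r := by linarith
    -- the two families of points
    set wp : ℝ → ℂ := fun δ => (r : ℂ) * Complex.exp (((Ψ + (Real.pi - δ) : ℝ) : ℂ) * Complex.I)
      with hwp
    set wm : ℝ → ℂ := fun δ => (r : ℂ) * Complex.exp (((Ψ + (-Real.pi + δ) : ℝ) : ℂ) * Complex.I)
      with hwm
    have hwabs : ∀ (φ : ℝ), ‖(r : ℂ) * Complex.exp (((φ : ℝ) : ℂ) * Complex.I)‖ = r :=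
      fun φ => abs_polar r φ hr0.le
    have hwne : ∀ (φ : ℝ), ((r : ℂ) * Complex.exp (((φ : ℝ) : ℂ) * Complex.I)) ≠ 0 :=
      fun φ => mul_ne_zero (by exact_mod_cast hr0.ne') (Complex.exp_ne_zero _)
    -- bound from hasymp
    have hbnd : ∀ (φ : ℝ),
        ‖L ((r : ℂ) * Complex.exp (((φ : ℝ) : ℂ) * Complex.I))
          - Hs ((r : ℂ) * Complex.exp (((φ : ℝ) : ℂ) * Complex.I))‖
          ≤ C / 4 * (r ^ (α - (J : ℝ) / (m : ℝ))) := by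
      intro φ
      have h1 := hR _ (by rw [hwabs φ]; exact hrR) (by rw [hsec]; exact hwne φ)
      rw [hwabs φ] at h1
      calc ‖_‖ ≤ C / 4 * ‖r ^ (α - (J : ℝ) / (m : ℝ))‖ := h1
        _ = C / 4 * (r ^ (α - (J : ℝ) / (m : ℝ))) := by
            rw [Real.norm_eq_abs, _root_.abs_of_nonneg (Real.rpow_nonneg hr0.le _)]
    -- limits of L along the two families
    have hz₀mem : ((r : ℂ) * Complex.exp (((φp : ℝ) : ℂ) * Complex.I)) ∈ sector Ψ ε := by
      rw [hsec]; exact hwne φp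
    have hLcont : ContinuousAt L ((r : ℂ) * Complex.exp (((φp : ℝ) : ℂ) * Complex.I)) :=
      (hL.continuousOn.continuousAt (hopen.mem_nhds hz₀mem))
    have hinner : ∀ (s : ℝ) (φ₀ : ℝ), Filter.Tendsto (fun δ : ℝ => ((Ψ + (s + φ₀ * δ) : ℝ) : ℂ))
        (nhdsWithin 0 (Set.Ioi 0)) (nhds ((Ψ + s : ℝ) : ℂ)) := by
      intro s φ₀
      have hcont : Continuous (fun δ : ℝ => ((Ψ + (s + φ₀ * δ) : ℝ) : ℂ)) := by
        continuity
      have h1 := hcont.tendsto 0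
      simp only [mul_zero, add_zero] at h1
      exact h1.mono_left nhdsWithin_le_nhds
    have hwp_t : Filter.Tendsto wp (nhdsWithin 0 (Set.Ioi 0))
        (nhds ((r : ℂ) * Complex.exp (((φp : ℝ) : ℂ) * Complex.I))) := by
      rw [hwp]
      have h1 : Filter.Tendsto (fun δ : ℝ => ((Ψ + (Real.pi + (-1) * δ) : ℝ) : ℂ))
          (nhdsWithin 0 (Set.Ioi 0)) (nhds ((Ψ + Real.pi : ℝ) : ℂ)) := hinner Real.pi (-1)
      have h2 := ((Complex.continuous_exp.tendsto _).comp (h1.mul_const Complex.I)).const_mul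
        ((r : ℂ))
      refine h2.congr fun δ => ?_
      have hre : Ψ + (Real.pi + -1 * δ) = Ψ + (Real.pi - δ) := by ring
      simp only [Function.comp, hre]
    have hwm_t : Filter.Tendsto wm (nhdsWithin 0 (Set.Ioi 0))
        (nhds ((r : ℂ) * Complex.exp (((φm : ℝ) : ℂ) * Complex.I))) := by
      rw [hwm]
      have h1 : Filter.Tendsto (fun δ : ℝ => ((Ψ + (-Real.pi + 1 * δ) : ℝ) : ℂ))
          (nhdsWithin 0 (Set.Ioi 0)) (nhds ((Ψ + -Real.pi : ℝ) : ℂ)) := hinner (-Real.pi) 1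
      have h2 := ((Complex.continuous_exp.tendsto _).comp (h1.mul_const Complex.I)).const_mul
        ((r : ℂ))
      refine h2.congr fun δ => ?_
      have hre : Ψ + (-Real.pi + 1 * δ) = Ψ + (-Real.pi + δ) := by ring
      simp only [Function.comp, hre]
    -- the +side and -side limit points coincide
    have hzz : ((r : ℂ) * Complex.exp (((φm : ℝ) : ℂ) * Complex.I))
        = ((r : ℂ) * Complex.exp (((φp : ℝ) : ℂ) * Complex.I)) := by
      congr 1
      have harg : ((φp : ℝ) : ℂ) * Complex.I
          = ((φm : ℝ) : ℂ) * Complex.I + ((2 * Real.pi : ℝ) : ℂ) * Complex.I := by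
        rw [hφp, hφm]; push_cast; ring
      rw [harg, Complex.exp_add]
      have h2pi : Complex.exp (((2 * Real.pi : ℝ) : ℂ) * Complex.I) = 1 := by
        push_cast; exact Complex.exp_two_pi_mul_I
      rw [h2pi, mul_one]
    have hLp : Filter.Tendsto (fun δ => L (wp δ)) (nhdsWithin 0 (Set.Ioi 0))
        (nhds (L ((r : ℂ) * Complex.exp (((φp : ℝ) : ℂ) * Complex.I)))) :=
      hLcont.tendsto.comp hwp_t
    have hLm : Filter.Tendsto (fun δ => L (wm δ)) (nhdsWithin 0 (Set.Ioi 0))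
        (nhds (L ((r : ℂ) * Complex.exp (((φp : ℝ) : ℂ) * Complex.I)))) := by
      refine hLcont.tendsto.comp ?_
      rw [← hzz]
      exact hwm_t
    -- limits of Hs along the two families
    have hHsV : ∀ (sgn : ℝ) (φ₀ : ℝ), (∀ δ : ℝ, δ ∈ Set.Ioo (0 : ℝ) Real.pi →
        (-Real.pi < sgn + φ₀ * δ ∧ sgn + φ₀ * δ ≤ Real.pi)) →
        Filter.Tendsto (fun δ : ℝ =>
          Hs ((r : ℂ) * Complex.exp (((Ψ + (sgn + φ₀ * δ) : ℝ) : ℂ) * Complex.I)))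
          (nhdsWithin 0 (Set.Ioi 0)) (nhds (V (Ψ + sgn) r)) := by
      intro sgn φ₀ hrange
      have houter : Continuous (fun w : ℂ => ∑ j ∈ Finset.range (J + 1),
          ∑ k ∈ Finset.range (M + 1),
          d j k * Complex.exp (eb α m j * (((Real.log r : ℝ) : ℂ) + w))
            * (((Real.log r : ℝ) : ℂ) + w) ^ k) := by
        refine continuous_finset_sum _ fun j _ => continuous_finset_sum _ fun k _ => ?_
        exact (continuous_const.mul (Complex.continuous_exp.comp
          (continuous_const.mul (continuous_const.add continuous_id)))).mul
          ((continuous_const.add continuous_id).pow k)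
      have hinner2 : Filter.Tendsto (fun δ : ℝ => ((Ψ + (sgn + φ₀ * δ) : ℝ) : ℂ) * Complex.I)
          (nhdsWithin 0 (Set.Ioi 0)) (nhds (((Ψ + sgn : ℝ) : ℂ) * Complex.I)) :=
        (hinner sgn φ₀).mul_const Complex.I
      have hcomp := (houter.tendsto _).comp hinner2
      have hIoo : Set.Ioo (0 : ℝ) Real.pi ∈ nhdsWithin (0 : ℝ) (Set.Ioi 0) := by
        have hIoo2 : Set.Ioo (0 : ℝ) Real.pi = Set.Iio Real.pi ∩ Set.Ioi 0 := by
          ext x; simp [Set.mem_Ioo, and_comm]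
        rw [hIoo2]
        exact Filter.inter_mem (mem_nhdsWithin_of_mem_nhds (Iio_mem_nhds hπ))
          self_mem_nhdsWithin
      refine Filter.Tendsto.congr' ?_ hcomp
      rw [Filter.eventuallyEq_iff_exists_mem]
      refine ⟨Set.Ioo (0 : ℝ) Real.pi, hIoo, fun δ hδ => ?_⟩
      obtain ⟨hb1, hb2⟩ := hrange δ hδ
      -- compute Hs at the polar point
      have hls := logSector_polar Ψ hr0 hb1 hb2
      simp only [Function.comp, hHs]
      refine Finset.sum_congr rfl fun j _ => Finset.sum_congr rfl fun k _ => ?_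
      rw [cpowSector, hls]
      rfl
    have hVp_t : Filter.Tendsto (fun δ => Hs (wp δ)) (nhdsWithin 0 (Set.Ioi 0))
        (nhds (V φp r)) := by
      have h1 := hHsV Real.pi (-1) (fun δ hδ => ⟨by obtain ⟨h1', h2'⟩ := hδ; linarith,
        by obtain ⟨h1', h2'⟩ := hδ; linarith⟩)
      rw [hφp]
      refine h1.congr fun δ => ?_
      have hre : Ψ + (Real.pi + -1 * δ) = Ψ + (Real.pi - δ) := by ring
      simp only [hre, hwp]
    have hVm_t : Filter.Tendsto (fun δ => Hs (wm δ)) (nhdsWithin 0 (Set.Ioi 0))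
        (nhds (V φm r)) := by
      have h1 := hHsV (-Real.pi) 1 (fun δ hδ => ⟨by obtain ⟨h1', h2'⟩ := hδ; linarith,
        by obtain ⟨h1', h2'⟩ := hδ; linarith⟩)
      rw [hφm]
      have h2 : Ψ + -Real.pi = Ψ - Real.pi := by ring
      rw [h2] at h1
      refine h1.congr fun δ => ?_
      have hre : Ψ + (-Real.pi + 1 * δ) = Ψ + (-Real.pi + δ) := by ring
      simp only [hre, hwm]
    -- assemble the bound
    have hnorm_t : Filter.Tendsto (fun δ => ‖Hs (wp δ) - Hs (wm δ)‖ - ‖L (wp δ) - L (wm δ)‖)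
        (nhdsWithin 0 (Set.Ioi 0)) (nhds (‖V φp r - V φm r‖ - 0)) := by
      have h1 := ((hVp_t.sub hVm_t).norm).sub ((hLp.sub hLm).norm)
      simpa using h1
    have hevbound : ∀ᶠ δ in nhdsWithin (0 : ℝ) (Set.Ioi 0),
        ‖Hs (wp δ) - Hs (wm δ)‖ - ‖L (wp δ) - L (wm δ)‖
          ≤ C / 2 * (r ^ (α - (J : ℝ) / (m : ℝ))) := by
      filter_upwards with δ
      have h1 := hbnd (Ψ + (Real.pi - δ))
      have h2 := hbnd (Ψ + (-Real.pi + δ))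
      have hsplit : Hs (wp δ) - Hs (wm δ)
          = -(L (wp δ) - Hs (wp δ)) + (L (wp δ) - L (wm δ)) + (L (wm δ) - Hs (wm δ)) := by
        ring
      have h3 : ‖Hs (wp δ) - Hs (wm δ)‖
          ≤ ‖L (wp δ) - Hs (wp δ)‖ + ‖L (wp δ) - L (wm δ)‖ + ‖L (wm δ) - Hs (wm δ)‖ := by
        rw [hsplit]
        refine le_trans (norm_add_le _ _) ?_
        have h4 := norm_add_le (-(L (wp δ) - Hs (wp δ))) (L (wp δ) - L (wm δ))
        rw [norm_neg] at h4
        linarith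
      have h5 : ‖L (wp δ) - Hs (wp δ)‖ ≤ C / 4 * (r ^ (α - (J : ℝ) / (m : ℝ))) := h1
      have h6 : ‖L (wm δ) - Hs (wm δ)‖ ≤ C / 4 * (r ^ (α - (J : ℝ) / (m : ℝ))) := h2
      linarith
    have hfinal := le_of_tendsto hnorm_t hevbound
    rw [sub_zero] at hfinal
    rw [hfeq r hr0]
    calc ‖V φp r - V φm r‖ ≤ C / 2 * (r ^ (α - (J : ℝ) / (m : ℝ))) := hfinal
      _ ≤ C * ‖r ^ (α - (J : ℝ) / (m : ℝ))‖ := by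
          rw [Real.norm_eq_abs, _root_.abs_of_nonneg (Real.rpow_nonneg hr0.le _)]
          have := Real.rpow_nonneg hr0.le (α - (J : ℝ) / (m : ℝ))
          nlinarith
  -- Step 2: apply the independence lemma
  have hAzero : A J = 0 := ind_lemma m hm α J A hVo J le_rfl
  -- Step 3: derive the invariance
  intro u
  have h0 : (A J).eval (u - (φm : ℂ) * Complex.I) = 0 := by rw [hAzero]; simp
  rw [hA] at h0
  simp only [Polynomial.eval_sub, Polynomial.eval_mul, Polynomial.eval_C,
    Polynomial.eval_comp, Polynomial.eval_add, Polynomial.eval_X] at h0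
  have harg1 : u - (φm : ℂ) * Complex.I + (φp : ℂ) * Complex.I = u + 2 * Real.pi * Complex.I := by
    rw [hφp, hφm]; push_cast; ring
  have harg2 : u - (φm : ℂ) * Complex.I + (φm : ℂ) * Complex.I = u := by ring
  rw [harg1, harg2, sub_eq_zero] at h0
  have hkey : Complex.exp (eb α m J * (u + 2 * Real.pi * Complex.I))
      * (Pd d M J).eval (u + 2 * Real.pi * Complex.I)
      = Complex.exp (eb α m J * u) * Complex.exp (-(eb α m J * ((φm : ℂ) * Complex.I)))
        * (Complex.exp (eb α m J * ((φp : ℂ) * Complex.I))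
          * (Pd d M J).eval (u + 2 * Real.pi * Complex.I)) := by
    have harg : eb α m J * (u + 2 * Real.pi * Complex.I)
        = (eb α m J * u + -(eb α m J * ((φm : ℂ) * Complex.I)))
          + eb α m J * ((φp : ℂ) * Complex.I) := by
      rw [hφp, hφm]; push_cast; ring
    rw [harg, Complex.exp_add, Complex.exp_add]
    ring
  rw [hkey, h0]
  have hcan : Complex.exp (-(eb α m J * ((φm : ℂ) * Complex.I)))
      * (Complex.exp (eb α m J * ((φm : ℂ) * Complex.I)) * (Pd d M J).eval u)
      = (Pd d M J).eval u := by
    rw [← mul_assoc, ← Complex.exp_add, neg_add_cancel, Complex.exp_zero, one_mul]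
  rw [mul_assoc, hcan]
end ShiftedAux
namespace ShiftedAux
open Polynomial Complex Filter Set Asymptotics

noncomputable def om (m : ℕ) (c : ℂ) (d : ℕ → ℕ → ℂ) (M : ℕ) (q : ℕ → ℕ → ℕ → ℂ) (j' j i : ℕ) : ℂ :=
  if m ∣ (j - j') ∧ j' ≤ j then
    (∑ k ∈ Finset.Icc i M, (k.choose i : ℂ) * d j' k * q j' (k - i) ((j - j') / m))
      * c ^ ((j - j') / m)
  else 0

lemma eb_shift (α : ℝ) {m : ℕ} (hm : 1 ≤ m) (j' t : ℕ) :
    eb α m (j' + t * m) = eb α m j' - (t : ℂ) := by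
  have hm0 : (m : ℝ) ≠ 0 := Nat.cast_ne_zero.mpr (by omega)
  rw [eb, eb]
  have h1 : (α - ((j' + t * m : ℕ) : ℝ) / (m : ℝ)) = (α - (j' : ℝ) / (m : ℝ)) - (t : ℝ) := by
    push_cast
    field_simp
    ring
  rw [h1]
  push_cast
  ring

lemma kept_eq {m : ℕ} (hm : 1 ≤ m) (N j' T : ℕ) (hT : N < T) (f : ℕ → ℂ) (g : ℕ → ℂ)
    (hg : ∀ j, m ∣ (j - j') → j' ≤ j → j ≤ N → g j = f ((j - j') / m))
    (hg0 : ∀ j, j ≤ N → ¬(m ∣ (j - j') ∧ j' ≤ j) → g j = 0) :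
    ∑ t ∈ (Finset.range T).filter (fun t => j' + t * m ≤ N), f t
      = ∑ j ∈ Finset.range (N + 1), g j := by
  have hm0 : 0 < m := by omega
  rw [← Finset.sum_filter_add_sum_filter_not (Finset.range (N + 1))
    (fun j => m ∣ (j - j') ∧ j' ≤ j) g]
  have hz : ∑ j ∈ (Finset.range (N + 1)).filter (fun j => ¬(m ∣ (j - j') ∧ j' ≤ j)), g j
      = 0 := by
    refine Finset.sum_eq_zero fun j hj => ?_
    obtain ⟨hj1, hj2⟩ := Finset.mem_filter.mp hj
    exact hg0 j (Nat.lt_succ_iff.mp (Finset.mem_range.mp hj1)) hj2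
  rw [hz, add_zero]
  refine Finset.sum_nbij' (i := fun t => j' + t * m) (j := fun j => (j - j') / m)
    ?_ ?_ ?_ ?_ ?_
  · intro t ht
    obtain ⟨ht1, ht2⟩ := Finset.mem_filter.mp ht
    rw [Finset.mem_range] at ht1
    refine Finset.mem_filter.mpr ⟨Finset.mem_range.mpr (by omega), ?_, by omega⟩
    simp [Nat.add_sub_cancel_left]
  · intro j hj
    obtain ⟨hj1, hdvd, hle⟩ := Finset.mem_filter.mp hj
    have hj2 := Nat.lt_succ_iff.mp (Finset.mem_range.mp hj1)
    have hmul : (j - j') / m * m = j - j' := Nat.div_mul_cancel hdvd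
    refine Finset.mem_filter.mpr ⟨Finset.mem_range.mpr ?_, ?_⟩
    · have h1 : (j - j') / m ≤ (j - j') / m * m := Nat.le_mul_of_pos_right _ hm0
      omega
    · omega
  · intro t ht
    simp [Nat.add_sub_cancel_left, Nat.mul_div_cancel _ hm0]
  · intro j hj
    obtain ⟨hj1, hdvd, hle⟩ := Finset.mem_filter.mp hj
    have hmul : (j - j') / m * m = j - j' := Nat.div_mul_cancel hdvd
    omega
  · intro t ht
    obtain ⟨ht1, ht2⟩ := Finset.mem_filter.mp ht
    rw [hg (j' + t * m) (by simp [Nat.add_sub_cancel_left]) (by omega) ht2]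
    congr 1
    rw [Nat.add_sub_cancel_left, Nat.mul_div_cancel _ hm0]

set_option maxHeartbeats 2000000 in
lemma block_est (α : ℝ) (m M N : ℕ) (Ψ ε' : ℝ) (c : ℂ) (d : ℕ → ℕ → ℂ)
    (q : ℕ → ℕ → ℕ → ℂ) (j' : ℕ) (hm : 1 ≤ m) (hj' : j' ≤ N)
    (hq : ∀ n T : ℕ, (fun w : ℂ => Gf (eb α m j') n w - ∑ t ∈ Finset.range T, q j' n t * w ^ t)
      =O[nhds (0 : ℂ)] fun w => ‖w‖ ^ T)
    (hbr : ∀ᶠ z in atInfSector Ψ ε',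
      Complex.exp (eb α m j' * logSector Ψ (z - c)) * (Pd d M j').eval (logSector Ψ (z - c))
        = Complex.exp (eb α m j' * (logSector Ψ z + Complex.log (1 - c / z)))
          * (Pd d M j').eval (logSector Ψ z + Complex.log (1 - c / z))) :
    (fun z : ℂ => (∑ k ∈ Finset.range (M + 1),
        d j' k * cpowSector Ψ (z - c) (eb α m j') * logSector Ψ (z - c) ^ k)
      - ∑ j ∈ Finset.range (N + 1), ∑ i ∈ Finset.range (M + 1),
        om m c d M q j' j i * cpowSector Ψ z (eb α m j) * logSector Ψ z ^ i)
      =o[atInfSector Ψ ε'] fun z => ‖z‖ ^ (α - (N : ℝ) / (m : ℝ)) := by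
  have hl := tendsto_abs_atInf Ψ ε'
  have hcz := tendsto_cdiv Ψ ε' c
  have hm0 : (0 : ℝ) < (m : ℝ) := by exact_mod_cast (by omega : 0 < m)
  set T : ℕ := N + 1 with hT
  set Cψ : ℝ := Real.pi + |Ψ| + 1 with hCψ
  set Err1 : ℂ → ℂ := fun z => ∑ k ∈ Finset.range (M + 1), ∑ i ∈ Finset.range (k + 1),
    (d j' k * (k.choose i : ℂ))
      * (Complex.exp (eb α m j' * logSector Ψ z) * logSector Ψ z ^ i)
      * (Gf (eb α m j') (k - i) (c / z)
          - ∑ t ∈ Finset.range T, q j' (k - i) t * (c / z) ^ t) with hErr1def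
  set Err2 : ℂ → ℂ := fun z => ∑ i ∈ Finset.range (M + 1),
    ∑ t ∈ (Finset.range T).filter (fun t => ¬ (j' + t * m ≤ N)),
      ((∑ k ∈ Finset.Icc i M, (k.choose i : ℂ) * d j' k * q j' (k - i) t) * c ^ t)
        * (Complex.exp (eb α m (j' + t * m) * logSector Ψ z) * logSector Ψ z ^ i) with hErr2def
  have hev : ∀ᶠ z in atInfSector Ψ ε', ((∑ k ∈ Finset.range (M + 1),
        d j' k * cpowSector Ψ (z - c) (eb α m j') * logSector Ψ (z - c) ^ k)
      - ∑ j ∈ Finset.range (N + 1), ∑ i ∈ Finset.range (M + 1),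
        om m c d M q j' j i * cpowSector Ψ z (eb α m j) * logSector Ψ z ^ i)
      = Err1 z + Err2 z := by
    filter_upwards [hbr, hl.eventually_ge_atTop 1] with z hbrz hz1
    have hz0 : z ≠ 0 := by
      intro h0; rw [h0] at hz1; simp at hz1; linarith
    set θ : ℂ := logSector Ψ z with hθdef
    set v : ℂ := Complex.log (1 - c / z) with hvdef
    set β : ℂ := eb α m j' with hβdef
    have a12 : ∑ k ∈ Finset.range (M + 1),
        d j' k * cpowSector Ψ (z - c) (eb α m j') * logSector Ψ (z - c) ^ k
        = Complex.exp (β * (θ + v)) * (Pd d M j').eval (θ + v) := by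
      simp only [cpowSector]
      rw [block_sum Ψ d M j' β (z - c)]
      exact hbrz
    have a3 : Complex.exp (β * (θ + v)) * (Pd d M j').eval (θ + v)
        = ∑ k ∈ Finset.range (M + 1), ∑ i ∈ Finset.range (k + 1),
          (d j' k * (k.choose i : ℂ)) * (Complex.exp (β * θ) * θ ^ i)
            * Gf β (k - i) (c / z) := by
      rw [Pd_eval, Finset.mul_sum]
      refine Finset.sum_congr rfl fun k _ => ?_
      rw [add_pow, Finset.mul_sum, Finset.mul_sum]
      refine Finset.sum_congr rfl fun i _ => ?_
      have hexp : Complex.exp (β * (θ + v)) = Complex.exp (β * θ) * Complex.exp (β * v) := by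
        rw [mul_add, Complex.exp_add]
      rw [hexp]
      show _ = d j' k * (k.choose i : ℂ) * (Complex.exp (β * θ) * θ ^ i)
        * (Complex.exp (β * Complex.log (1 - c / z)) * Complex.log (1 - c / z) ^ (k - i))
      rw [← hvdef]
      ring
    have hinv : Complex.exp (-θ) = z⁻¹ := by
      rw [Complex.exp_neg, hθdef, exp_logSector Ψ hz0]
    have hppow : ∀ t : ℕ, Complex.exp (β * θ) * (c / z) ^ t
        = c ^ t * Complex.exp (eb α m (j' + t * m) * θ) := by
      intro t
      have h1 : (c / z) ^ t = c ^ t * (Complex.exp (-θ)) ^ t := by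
        rw [hinv, div_pow, div_eq_mul_inv, inv_pow]
      have h3 : Complex.exp (β * θ) * (c ^ t * Complex.exp ((t : ℂ) * -θ))
          = c ^ t * Complex.exp (β * θ + (t : ℂ) * -θ) := by
        rw [Complex.exp_add]; ring
      have h4 : β * θ + (t : ℂ) * -θ = (β - (t : ℂ)) * θ := by ring
      rw [h1, ← Complex.exp_nat_mul, h3, h4, eb_shift α hm j' t, hβdef]
    have a45 : ∀ k i : ℕ, (d j' k * (k.choose i : ℂ)) * (Complex.exp (β * θ) * θ ^ i)
        * Gf β (k - i) (c / z)
        = (∑ t ∈ Finset.range T, ((k.choose i : ℂ) * d j' k * q j' (k - i) t * c ^ t)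
            * (Complex.exp (eb α m (j' + t * m) * θ) * θ ^ i))
          + (d j' k * (k.choose i : ℂ)) * (Complex.exp (β * θ) * θ ^ i)
            * (Gf β (k - i) (c / z) - ∑ t ∈ Finset.range T, q j' (k - i) t * (c / z) ^ t) := by
      intro k i
      have hsum : (d j' k * (k.choose i : ℂ)) * (Complex.exp (β * θ) * θ ^ i)
          * (∑ t ∈ Finset.range T, q j' (k - i) t * (c / z) ^ t)
          = ∑ t ∈ Finset.range T, ((k.choose i : ℂ) * d j' k * q j' (k - i) t * c ^ t)
            * (Complex.exp (eb α m (j' + t * m) * θ) * θ ^ i) := by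
        rw [Finset.mul_sum]
        refine Finset.sum_congr rfl fun t _ => ?_
        have h2 := hppow t
        calc d j' k * (k.choose i : ℂ) * (Complex.exp (β * θ) * θ ^ i)
            * (q j' (k - i) t * (c / z) ^ t)
            = d j' k * (k.choose i : ℂ) * θ ^ i * q j' (k - i) t
              * (Complex.exp (β * θ) * (c / z) ^ t) := by ring
          _ = d j' k * (k.choose i : ℂ) * θ ^ i * q j' (k - i) t
              * (c ^ t * Complex.exp (eb α m (j' + t * m) * θ)) := by rw [h2]
          _ = ((k.choose i : ℂ) * d j' k * q j' (k - i) t * c ^ t)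
              * (Complex.exp (eb α m (j' + t * m) * θ) * θ ^ i) := by ring
      rw [← hsum]
      ring
    have a6 : Complex.exp (β * (θ + v)) * (Pd d M j').eval (θ + v)
        = (∑ k ∈ Finset.range (M + 1), ∑ i ∈ Finset.range (k + 1),
            ∑ t ∈ Finset.range T, ((k.choose i : ℂ) * d j' k * q j' (k - i) t * c ^ t)
              * (Complex.exp (eb α m (j' + t * m) * θ) * θ ^ i)) + Err1 z := by
      rw [a3, hErr1def]
      simp only
      rw [← Finset.sum_add_distrib]
      refine Finset.sum_congr rfl fun k _ => ?_
      rw [← Finset.sum_add_distrib]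
      exact Finset.sum_congr rfl fun i _ => a45 k i
    have a7 : (∑ k ∈ Finset.range (M + 1), ∑ i ∈ Finset.range (k + 1),
          ∑ t ∈ Finset.range T, ((k.choose i : ℂ) * d j' k * q j' (k - i) t * c ^ t)
            * (Complex.exp (eb α m (j' + t * m) * θ) * θ ^ i))
        = (∑ i ∈ Finset.range (M + 1),
            ∑ t ∈ (Finset.range T).filter (fun t => j' + t * m ≤ N),
            ((∑ k ∈ Finset.Icc i M, (k.choose i : ℂ) * d j' k * q j' (k - i) t) * c ^ t)
              * (Complex.exp (eb α m (j' + t * m) * θ) * θ ^ i)) + Err2 z := by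
      rw [tri_sum M (fun k i => ∑ t ∈ Finset.range T,
        ((k.choose i : ℂ) * d j' k * q j' (k - i) t * c ^ t)
          * (Complex.exp (eb α m (j' + t * m) * θ) * θ ^ i)), hErr2def]
      simp only
      rw [← Finset.sum_add_distrib]
      refine Finset.sum_congr rfl fun i _ => ?_
      rw [Finset.sum_comm]
      have hco : ∀ t : ℕ, ∑ k ∈ Finset.Icc i M,
          ((k.choose i : ℂ) * d j' k * q j' (k - i) t * c ^ t)
            * (Complex.exp (eb α m (j' + t * m) * θ) * θ ^ i)
          = ((∑ k ∈ Finset.Icc i M, (k.choose i : ℂ) * d j' k * q j' (k - i) t) * c ^ t)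
            * (Complex.exp (eb α m (j' + t * m) * θ) * θ ^ i) := by
        intro t
        rw [Finset.sum_mul, Finset.sum_mul]
      rw [Finset.sum_congr rfl fun t _ => hco t]
      exact (Finset.sum_filter_add_sum_filter_not (Finset.range T)
        (fun t => j' + t * m ≤ N) _).symm
    have a8 : ∀ i : ℕ, (∑ t ∈ (Finset.range T).filter (fun t => j' + t * m ≤ N),
        ((∑ k ∈ Finset.Icc i M, (k.choose i : ℂ) * d j' k * q j' (k - i) t) * c ^ t)
          * (Complex.exp (eb α m (j' + t * m) * θ) * θ ^ i))
        = ∑ j ∈ Finset.range (N + 1),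
            om m c d M q j' j i * (Complex.exp (eb α m j * θ) * θ ^ i) := by
      intro i
      refine kept_eq hm N j' T (by omega) _ _ ?_ ?_
      · intro j hdvd hle hjN
        have ht : j' + (j - j') / m * m = j := by
          have h2 := Nat.div_mul_cancel hdvd
          omega
        rw [om, if_pos ⟨hdvd, hle⟩, ht]
      · intro j hjN hnot
        rw [om, if_neg hnot, zero_mul]
    have a9 : ∑ j ∈ Finset.range (N + 1), ∑ i ∈ Finset.range (M + 1),
        om m c d M q j' j i * cpowSector Ψ z (eb α m j) * logSector Ψ z ^ i
        = ∑ i ∈ Finset.range (M + 1), ∑ j ∈ Finset.range (N + 1),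
          om m c d M q j' j i * (Complex.exp (eb α m j * θ) * θ ^ i) := by
      rw [Finset.sum_comm]
      exact Finset.sum_congr rfl fun i _ => Finset.sum_congr rfl fun j _ => by
        rw [cpowSector]; ring
    rw [a12, a6, a7, a9, Finset.sum_congr rfl fun i _ => a8 i]
    ring
  -- Step 2: estimates
  have hE1 : Err1 =o[atInfSector Ψ ε'] fun z => ‖z‖ ^ (α - (N : ℝ) / (m : ℝ)) := by
    rw [hErr1def]
    refine Asymptotics.IsLittleO.fun_sum fun k hk => ?_
    refine Asymptotics.IsLittleO.fun_sum fun i hi => ?_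
    have hik : i ≤ M := by
      have h1 := Finset.mem_range.mp hi
      have h2 := Finset.mem_range.mp hk
      omega
    have hBas : (fun z => Complex.exp (eb α m j' * logSector Ψ z) * logSector Ψ z ^ i)
        =O[atInfSector Ψ ε'] fun z =>
          (Real.log (‖z‖) + Cψ) ^ M * ‖z‖ ^ (α - (j' : ℝ) / (m : ℝ)) :=
      basis_isBigO hl Ψ (α - (j' : ℝ) / (m : ℝ)) hik
    have hRem := (hq (k - i) T).comp_tendsto hcz
    have hprod := hBas.mul hRem
    have hcomb := hprod.const_mul_left (d j' k * (k.choose i : ℂ))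
    have hδγ : (α - (j' : ℝ) / (m : ℝ)) - (T : ℝ) < α - (N : ℝ) / (m : ℝ) := by
      have h1 : (N : ℝ) / (m : ℝ) ≤ (N : ℝ) := by
        refine div_le_self (Nat.cast_nonneg N) ?_
        exact_mod_cast hm
      have h2 : (0 : ℝ) ≤ (j' : ℝ) / (m : ℝ) := by positivity
      have h3 : (T : ℝ) = (N : ℝ) + 1 := by rw [hT]; push_cast; ring
      linarith
    have hlog := (logo hl Cψ M hδγ).const_mul_left (‖c‖ ^ T)
    have hbound : (fun z => ((Real.log (‖z‖) + Cψ) ^ M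
          * ‖z‖ ^ (α - (j' : ℝ) / (m : ℝ))) * ((fun w : ℂ => ‖w‖ ^ T) (c / z)))
        =o[atInfSector Ψ ε'] fun z => ‖z‖ ^ (α - (N : ℝ) / (m : ℝ)) := by
      refine hlog.congr' ?_ (Filter.EventuallyEq.refl _ _)
      filter_upwards [hl.eventually_ge_atTop 1] with z hz1
      have hzpos : (0 : ℝ) < ‖z‖ := by linarith
      have h1 : ‖c / z‖ ^ T = ‖c‖ ^ T * (‖z‖ ^ (T : ℝ))⁻¹ := by
        rw [norm_div, div_pow, Real.rpow_natCast, div_eq_mul_inv]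
      show ‖c‖ ^ T * ((Real.log (‖z‖) + Cψ) ^ M
          * ‖z‖ ^ ((α - (j' : ℝ) / (m : ℝ)) - (T : ℝ))) = _
      rw [Real.rpow_sub hzpos]
      simp only [h1]
      rw [Real.rpow_natCast]
      field_simp
    have := hcomb.trans_isLittleO hbound
    refine this.congr_left fun z => by simp only [Function.comp]; ring
  have hE2 : Err2 =o[atInfSector Ψ ε'] fun z => ‖z‖ ^ (α - (N : ℝ) / (m : ℝ)) := by
    rw [hErr2def]
    refine Asymptotics.IsLittleO.fun_sum fun i hi => ?_
    refine Asymptotics.IsLittleO.fun_sum fun t ht => ?_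
    have hik : i ≤ M := Nat.lt_succ_iff.mp (Finset.mem_range.mp hi)
    obtain ⟨htT, htN⟩ := Finset.mem_filter.mp ht
    have hlt : (α - ((j' + t * m : ℕ) : ℝ) / (m : ℝ)) < α - (N : ℝ) / (m : ℝ) := by
      have h1 : (N : ℝ) < ((j' + t * m : ℕ) : ℝ) := by
        exact_mod_cast (by omega : N < j' + t * m)
      have h2 : (N : ℝ) / (m : ℝ) < ((j' + t * m : ℕ) : ℝ) / (m : ℝ) := by
        exact (div_lt_div_iff_of_pos_right hm0).mpr h1
      linarith
    have hb := basis_littleO hl Ψ hlt (M := M) hik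
    exact hb.const_mul_left _
  have hevsymm := hev.mono fun z hz => hz.symm
  exact (hE1.add hE2).congr' hevsymm (Filter.EventuallyEq.refl _ _)
end ShiftedAux

open ShiftedAux Polynomial in
set_option maxHeartbeats 2000000 in
/-- **Asymptotic expansion of a shifted characteristic-function logarithm** (Theorem 4.2).
If `L` admits, on the sector `S(Ψ, ε)`, an asymptotic expansion to all orders with exponents
`α − j/m` and powers of `log z` up to `M`, then `z ↦ L(z − c)` admits, on the smaller sector
`S(Ψ, ε′)`, an expansion of exactly the same form with coefficients `Ω`, and the leading
coefficients agree: `Ω 0 k = d 0 k` for all `k ≤ M`. -/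
theorem shifted_asymptotic_expansion (α : ℝ) (m M : ℕ) (Ψ ε : ℝ) (L : ℂ → ℂ)
    (d : ℕ → ℕ → ℂ) (c : ℂ) (ε' R₀ : ℝ)
    (hm : 1 ≤ m) (hΨ : Ψ ∈ Set.Ico (-Real.pi) Real.pi) (hε : 0 < ε)
    (hL : DifferentiableOn ℂ L (sector Ψ ε))
    (hasymp : ∀ N : ℕ, (fun z : ℂ => L z - ∑ j ∈ Finset.range (N + 1),
        ∑ k ∈ Finset.range (M + 1),
          d j k * cpowSector Ψ z ((α - (j : ℝ) / (m : ℝ) : ℝ) : ℂ) * logSector Ψ z ^ k)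
      =o[atInfSector Ψ ε] fun z : ℂ => ‖z‖ ^ (α - (N : ℝ) / (m : ℝ)))
    (hε' : 0 < ε') (hε'ε : ε' < ε) (hR₀ : 0 < R₀)
    (hshift : ∀ z ∈ sector Ψ ε', R₀ ≤ ‖z‖ → z - c ∈ sector Ψ ε) :
    ∃ Ω : ℕ → ℕ → ℂ,
      (∀ N : ℕ, (fun z : ℂ => L (z - c) - ∑ j ∈ Finset.range (N + 1),
          ∑ k ∈ Finset.range (M + 1),
            Ω j k * cpowSector Ψ z ((α - (j : ℝ) / (m : ℝ) : ℝ) : ℂ) * logSector Ψ z ^ k)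
        =o[atInfSector Ψ ε'] fun z : ℂ => ‖z‖ ^ (α - (N : ℝ) / (m : ℝ))) ∧
      ∀ k, k ≤ M → Ω 0 k = d 0 k := by
  classical
  -- Taylor coefficients of the auxiliary functions
  have hGf : ∀ j' n : ℕ, ∃ qf : ℕ → ℂ, qf 0 = (if n = 0 then (1 : ℂ) else 0) ∧
      ∀ T : ℕ, (fun w : ℂ => Gf (eb α m j') n w - ∑ t ∈ Finset.range T, qf t * w ^ t)
        =O[nhds (0 : ℂ)] fun w => ‖w‖ ^ T := fun j' n => Gf_expansion (eb α m j') n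
  choose q hq0 hq using hGf
  -- the branch identity, valid in both the narrow and the wide sector case
  have hbranch : ∀ᶠ z in atInfSector Ψ ε', ∀ j' : ℕ,
      Complex.exp (eb α m j' * logSector Ψ (z - c)) * (Pd d M j').eval (logSector Ψ (z - c))
        = Complex.exp (eb α m j' * (logSector Ψ z + Complex.log (1 - c / z)))
          * (Pd d M j').eval (logSector Ψ z + Complex.log (1 - c / z)) := by
    rcases lt_or_ge ε' Real.pi with hcase | hcase
    · filter_upwards [good_branch Ψ ε' c hcase] with z hg j'
      rw [hg]
    · have hεπ : Real.pi < ε := lt_of_le_of_lt hcase hε'ε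
      have hinvall := bad_inv α m M Ψ ε L d hm hΨ hεπ hL hasymp
      have habs := tendsto_abs_atInf Ψ ε'
      filter_upwards [habs.eventually_ge_atTop (‖c‖ + 1)] with z hz j'
      have hc0 : (0 : ℝ) ≤ ‖c‖ := norm_nonneg c
      have hz0 : z ≠ 0 := by
        intro h0; rw [h0] at hz; simp at hz; linarith
      have hzc0 : z - c ≠ 0 := by
        intro h0
        rw [sub_eq_zero] at h0
        rw [h0] at hz
        linarith
      have hb0 : (1 : ℂ) - c / z ≠ 0 := by
        intro h0
        rw [sub_eq_zero, eq_comm, div_eq_iff hz0, one_mul] at h0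
        rw [← h0] at hz
        linarith
      have hexp1 : Complex.exp (logSector Ψ (z - c)) = z - c := exp_logSector Ψ hzc0
      have hexp2 : Complex.exp (logSector Ψ z + Complex.log (1 - c / z)) = z - c := by
        rw [Complex.exp_add, exp_logSector Ψ hz0, Complex.exp_log hb0]
        field_simp
      obtain ⟨n, hn⟩ := Complex.exp_eq_exp_iff_exists_int.mp (hexp1.trans hexp2.symm)
      rw [hn]
      exact zinv (hinvall j') n _
  -- shifted main expansion pulled back
  have hE1 : ∀ N : ℕ, (fun z : ℂ => L (z - c) - ∑ j' ∈ Finset.range (N + 1),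
      ∑ k ∈ Finset.range (M + 1),
        d j' k * cpowSector Ψ (z - c) (eb α m j') * logSector Ψ (z - c) ^ k)
      =o[atInfSector Ψ ε'] fun z : ℂ => ‖z‖ ^ (α - (N : ℝ) / (m : ℝ)) := by
    intro N
    have h1 := (hasymp N).comp_tendsto (tendsto_sub_c hshift)
    have h2 := h1.trans_isBigO (shifted_rpow_isBigO Ψ ε' c (α - (N : ℝ) / (m : ℝ)))
    exact h2
  refine ⟨fun j i => ∑ j'' ∈ Finset.range (j + 1), om m c d M q j'' j i, ?_, ?_⟩
  · intro N
    show (fun z : ℂ => L (z - c) - ∑ j ∈ Finset.range (N + 1),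
        ∑ k ∈ Finset.range (M + 1),
          (∑ j'' ∈ Finset.range (j + 1), om m c d M q j'' j k)
            * cpowSector Ψ z (eb α m j) * logSector Ψ z ^ k)
      =o[atInfSector Ψ ε'] fun z : ℂ => ‖z‖ ^ (α - (N : ℝ) / (m : ℝ))
    have hblocks : ∀ j' ∈ Finset.range (N + 1),
        (fun z : ℂ => (∑ k ∈ Finset.range (M + 1),
            d j' k * cpowSector Ψ (z - c) (eb α m j') * logSector Ψ (z - c) ^ k)
          - ∑ j ∈ Finset.range (N + 1), ∑ i ∈ Finset.range (M + 1),
            om m c d M q j' j i * cpowSector Ψ z (eb α m j) * logSector Ψ z ^ i)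
          =o[atInfSector Ψ ε'] fun z => ‖z‖ ^ (α - (N : ℝ) / (m : ℝ)) := by
      intro j' hj'
      exact block_est α m M N Ψ ε' c d q j' hm (Nat.lt_succ_iff.mp (Finset.mem_range.mp hj'))
        (fun n T => hq j' n T) (hbranch.mono fun z h => h j')
    have hsum := Asymptotics.IsLittleO.fun_sum hblocks
    have htotal := (hE1 N).add hsum
    refine htotal.congr' ?_ (Filter.EventuallyEq.refl _ _)
    filter_upwards with z
    have hΩ : ∀ j k : ℕ, j ≤ N → (∑ j'' ∈ Finset.range (j + 1), om m c d M q j'' j k)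
        = ∑ j'' ∈ Finset.range (N + 1), om m c d M q j'' j k := by
      intro j k hj
      refine Finset.sum_subset (Finset.range_subset_range.mpr (by omega)) ?_
      intro j'' h1 h2
      rw [Finset.mem_range] at h2
      rw [om, if_neg]
      push_neg
      intro hdvd
      omega
    have e1 : ∑ j ∈ Finset.range (N + 1), ∑ k ∈ Finset.range (M + 1),
        (∑ j'' ∈ Finset.range (j + 1), om m c d M q j'' j k)
          * cpowSector Ψ z (eb α m j) * logSector Ψ z ^ k
        = ∑ j'' ∈ Finset.range (N + 1), ∑ j ∈ Finset.range (N + 1),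
          ∑ k ∈ Finset.range (M + 1),
            om m c d M q j'' j k * cpowSector Ψ z (eb α m j) * logSector Ψ z ^ k := by
      have e2 : ∀ j ∈ Finset.range (N + 1), ∀ k ∈ Finset.range (M + 1),
          (∑ j'' ∈ Finset.range (j + 1), om m c d M q j'' j k)
            * cpowSector Ψ z (eb α m j) * logSector Ψ z ^ k
          = ∑ j'' ∈ Finset.range (N + 1),
            om m c d M q j'' j k * cpowSector Ψ z (eb α m j) * logSector Ψ z ^ k := by
        intro j hj k _
        rw [hΩ j k (Nat.lt_succ_iff.mp (Finset.mem_range.mp hj)), Finset.sum_mul,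
          Finset.sum_mul]
      rw [Finset.sum_congr rfl fun j hj => Finset.sum_congr rfl fun k hk => e2 j hj k hk]
      rw [Finset.sum_congr rfl fun j (hj : j ∈ Finset.range (N + 1)) => Finset.sum_comm]
      exact Finset.sum_comm
    rw [e1, Finset.sum_sub_distrib]
    ring
  · intro k hk
    show (∑ j'' ∈ Finset.range (0 + 1), om m c d M q j'' 0 k) = d 0 k
    rw [Finset.sum_range_one, om, if_pos ⟨(by simp : m ∣ (0 - 0)), le_refl 0⟩]
    have h00 : (0 - 0) / m = 0 := by simp
    rw [h00]
    have hsum : ∑ k' ∈ Finset.Icc k M, (k'.choose k : ℂ) * d 0 k' * q 0 (k' - k) 0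
        = d 0 k := by
      rw [Finset.sum_eq_single_of_mem k (Finset.mem_Icc.mpr ⟨le_refl k, hk⟩) ?_]
      · rw [hq0 0 (k - k)]
        simp
      · intro k' hk' hne
        rw [hq0 0 (k' - k)]
        obtain ⟨h1, h2⟩ := Finset.mem_Icc.mp hk'
        rw [if_neg (by omega)]
        ring
    rw [hsum]
    simp
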